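/- Let 𝔅 be a unital complex algebra and β, γ ∈ Mul[[𝔅]]. Then: (a) 1 + Iβ is invertible with respect to the formal product; (b) I + IγI is invertible with respect to formal composition; and (c) there is a unique element ρ ∈ Mul[[𝔅]] satisfying β = (ρ ∘ (I + IγI)) · (1 + Iβ), namely ρ = (β (1 + Iβ)^{−1}) ∘ (I + IγI)^{⟨−1⟩}. In particular the c-free R-transform ^cR_{β,γ} is well defined and equals (β (1 + Iβ)^{−1}) ∘ (I + IγI)^{⟨−1⟩}. -/

import Mathlib

/-!
STATEMENT 6: For a unital complex algebra `𝔅` and `β, γ ∈ Mul[[𝔅]]`: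
(a) `1 + Iβ` is invertible for the formal product;
(b) `I + IγI` is invertible for formal composition;
(c) there is a unique `ρ ∈ Mul[[𝔅]]` with `β = (ρ ∘ (I + IγI)) (1 + Iβ)`, namely
    `ρ = (β (1 + Iβ)⁻¹) ∘ (I + IγI)^⟨−1⟩`; in particular the c-free R-transform
    `^cR_{β,γ}` is well defined and equals this expression.

A formal multilinear function series over `B` is encoded as a sequence of functions
`ω n : (Fin n → B) → B`; the `0`-th component encodes the constant term `ω₀ ∈ B`.
-/

/-- Formal multilinear function series over `B` (underlying functions). -/
abbrev FormalMulSeries (B : Type*) := ∀ n : ℕ, (Fin n → B) → B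

/-- The components of `ω` are `ℂ`-multilinear. -/
def IsMultilinearSeries {B : Type*} [Ring B] [Algebra ℂ B] (ω : FormalMulSeries B) : Prop :=
  ∀ (n : ℕ) (b : Fin n → B) (i : Fin n) (x y : B) (c : ℂ),
    ω n (Function.update b i (x + y))
        = ω n (Function.update b i x) + ω n (Function.update b i y)
    ∧ ω n (Function.update b i (c • x)) = c • ω n (Function.update b i x)

/-- The formal product of two formal multilinear function series:
`(αβ)ₙ(b₁,…,bₙ) = ∑ₖ αₖ(b₁,…,bₖ) βₙ₋ₖ(bₖ₊₁,…,bₙ)`. -/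
def mulS {B : Type*} [Ring B] (α β : FormalMulSeries B) : FormalMulSeries B := fun n b =>
  ∑ k : Fin (n + 1),
    α k.1 (fun i => b ⟨i.1, by have := i.2; have := k.2; omega⟩) *
      β (n - k.1) (fun i => b ⟨k.1 + i.1, by have := i.2; have := k.2; omega⟩)

/-- Formal composition `(α ∘ β)ₙ(b₁,…,bₙ) = ∑ α_k(β_{p₁}(…), …, β_{p_k}(…))`, the sum
being over all `k`-tuples `p₁,…,p_k ≥ 1` with `p₁ + ⋯ + p_k = n` (encoded as
`Composition n`); the `0`-th component is `α₀`. -/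
def compS {B : Type*} [Ring B] (α β : FormalMulSeries B) : FormalMulSeries B := fun n b =>
  ∑ c : Composition n,
    α c.length (fun i => β (c.blocksFun i) (fun j => b (c.embedding i j)))

/-- The series `1 = (1, 0, 0, …)`. -/
def oneS {B : Type*} [Ring B] : FormalMulSeries B := fun n _ => if n = 0 then 1 else 0

/-- The series `I = (0, id_𝔅, 0, 0, …)`. -/
def idS {B : Type*} [Ring B] : FormalMulSeries B := fun n b =>
  if h : n = 1 then b ⟨0, by omega⟩ else 0

/-- `δ` is a two-sided inverse of `α` for the formal product. -/
def IsMulInvOf {B : Type*} [Ring B] (δ α : FormalMulSeries B) : Prop :=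
  mulS α δ = oneS ∧ mulS δ α = oneS

/-- `δ` is a two-sided inverse of `α` for formal composition (with vanishing constant
term, as required for formal composition to make sense). -/
def IsCompInvOf {B : Type*} [Ring B] (δ α : FormalMulSeries B) : Prop :=
  (∀ b : Fin 0 → B, δ 0 b = 0) ∧ compS α δ = idS ∧ compS δ α = idS

set_option linter.unusedSectionVars false
set_option linter.unusedVariables false

section Helpers
variable {B : Type*} [Ring B] [Algebra ℂ B]

/-- congruence for raw series -/
theorem rawCongr (ω : FormalMulSeries B) {n m : ℕ} (h : n = m) {v : Fin n → B} {w : Fin m → B}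
    (hv : ∀ (i : ℕ) (hi : i < n) (hi' : i < m), v ⟨i, hi⟩ = w ⟨i, hi'⟩) : ω n v = ω m w := by
  subst h
  exact congrArg (ω n) (funext fun i => by simpa using hv i.1 i.2 i.2)

/-- slotwise multilinearity of a single function -/
def MLfun {n : ℕ} (f : (Fin n → B) → B) : Prop :=
  ∀ (b : Fin n → B) (i : Fin n) (x y : B) (c : ℂ),
    f (Function.update b i (x + y)) = f (Function.update b i x) + f (Function.update b i y)
    ∧ f (Function.update b i (c • x)) = c • f (Function.update b i x)

theorem isMultilinearSeries_iff (ω : FormalMulSeries B) :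
    IsMultilinearSeries ω ↔ ∀ n, MLfun (ω n) := Iff.rfl

theorem MLfun.zero_slot {n : ℕ} {f : (Fin n → B) → B} (hf : MLfun f) (b : Fin n → B)
    (i : Fin n) (hb : b i = 0) : f b = 0 := by
  have h : f (Function.update b i 0) = 0 := by
    have h := (hf b i 0 0 0).2
    rwa [zero_smul, zero_smul] at h
  rw [← Function.update_eq_self i b, hb]
  exact h

theorem MLfun_sum {n : ℕ} {ι : Type*} (s : Finset ι) (F : ι → (Fin n → B) → B)
    (h : ∀ k ∈ s, MLfun (F k)) : MLfun (fun b => ∑ k ∈ s, F k b) := by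
  intro b i x y c
  constructor
  · rw [← Finset.sum_add_distrib]
    exact Finset.sum_congr rfl fun k hk => (h k hk b i x y c).1
  · rw [Finset.smul_sum]
    exact Finset.sum_congr rfl fun k hk => (h k hk b i x y c).2

theorem MLfun_neg {n : ℕ} {f : (Fin n → B) → B} (hf : MLfun f) : MLfun (fun b => -(f b)) := by
  intro b i x y c
  refine ⟨?_, ?_⟩
  · simp only [(hf b i x y c).1]; abel
  · simp only [(hf b i x y c).2, smul_neg]

theorem MLfun_add {n : ℕ} {f g : (Fin n → B) → B} (hf : MLfun f) (hg : MLfun g) :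
    MLfun (fun b => f b + g b) := by
  intro b i x y c
  refine ⟨?_, ?_⟩
  · simp only [(hf b i x y c).1, (hg b i x y c).1]; abel
  · simp only [(hf b i x y c).2, (hg b i x y c).2, smul_add]

theorem MLfun_sub {n : ℕ} {f g : (Fin n → B) → B} (hf : MLfun f) (hg : MLfun g) :
    MLfun (fun b => f b - g b) := by
  intro b i x y c
  refine ⟨?_, ?_⟩
  · simp only [(hf b i x y c).1, (hg b i x y c).1]; abel
  · simp only [(hf b i x y c).2, (hg b i x y c).2, smul_sub]

theorem MLfun_zero {n : ℕ} : MLfun (fun _ : Fin n → B => (0 : B)) := by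
  intro b i x y c; simp

theorem MLfun_oneS (n : ℕ) : MLfun ((oneS : FormalMulSeries B) n) := by
  intro b i x y c
  have h0 : n ≠ 0 := fun h => (h ▸ i).elim0
  simp [oneS, h0]

theorem MLfun_idS (n : ℕ) : MLfun ((idS : FormalMulSeries B) n) := by
  intro b i x y c
  rcases eq_or_ne n 1 with h | h
  · subst h
    have hi : i = (⟨0, by omega⟩ : Fin 1) := Subsingleton.elim _ _
    subst hi
    simp [idS]
  · simp [idS, h]

theorem idS_one (v : Fin 1 → B) : (idS : FormalMulSeries B) 1 v = v ⟨0, one_pos⟩ := by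
  simp [idS]

theorem idS_ne {m : ℕ} (h : m ≠ 1) (v : Fin m → B) : (idS : FormalMulSeries B) m v = 0 := by
  simp [idS, h]

theorem oneS_zero (v : Fin 0 → B) : (oneS : FormalMulSeries B) 0 v = 1 := rfl

theorem oneS_ne {m : ℕ} (h : m ≠ 0) (v : Fin m → B) : (oneS : FormalMulSeries B) m v = 0 := by
  simp [oneS, h]

/-- update commutes with "front restriction" when the slot is in front -/
theorem update_front {n k : ℕ} (hk : k ≤ n) (b : Fin n → B) (i : Fin n) (hik : i.1 < k) (t : B) :
    (fun j : Fin k => Function.update b i t ⟨j.1, by omega⟩)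
      = Function.update (fun j : Fin k => b ⟨j.1, by omega⟩) ⟨i.1, hik⟩ t := by
  funext j
  rcases eq_or_ne j.1 i.1 with hj | hj
  · have h1 : (⟨j.1, by omega⟩ : Fin n) = i := Fin.ext hj
    have h2 : j = (⟨i.1, hik⟩ : Fin k) := Fin.ext hj
    rw [h1, h2, Function.update_self, Function.update_self]
  · rw [Function.update_of_ne (fun h => hj (congrArg Fin.val h)),
      Function.update_of_ne (fun h => hj (by simpa using congrArg Fin.val h))]

theorem update_front_skip {n k : ℕ} (hk : k ≤ n) (b : Fin n → B) (i : Fin n) (hik : ¬ i.1 < k)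
    (t : B) :
    (fun j : Fin k => Function.update b i t ⟨j.1, by omega⟩)
      = (fun j : Fin k => b ⟨j.1, by omega⟩) := by
  funext j
  exact Function.update_of_ne (fun h => hik (by have := congrArg Fin.val h; simp at this; omega)) _ _

theorem update_back {n k m : ℕ} (hk : k + m = n) (b : Fin n → B) (i : Fin n) (hik : k ≤ i.1)
    (t : B) :
    (fun j : Fin m => Function.update b i t ⟨k + j.1, by omega⟩)
      = Function.update (fun j : Fin m => b ⟨k + j.1, by omega⟩) ⟨i.1 - k, by omega⟩ t := by
  funext j
  rcases eq_or_ne (k + j.1) i.1 with hj | hj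
  · have h1 : (⟨k + j.1, by omega⟩ : Fin n) = i := Fin.ext hj
    have h2 : j = (⟨i.1 - k, by omega⟩ : Fin m) := Fin.ext (by simp; omega)
    rw [h1, h2, Function.update_self, Function.update_self]
  · rw [Function.update_of_ne (fun h => hj (congrArg Fin.val h)),
      Function.update_of_ne (fun h => hj (by have := congrArg Fin.val h; simp at this; omega))]

theorem update_back_skip {n k m : ℕ} (hk : k + m = n) (b : Fin n → B) (i : Fin n) (hik : i.1 < k)
    (t : B) :
    (fun j : Fin m => Function.update b i t ⟨k + j.1, by omega⟩)
      = (fun j : Fin m => b ⟨k + j.1, by omega⟩) := by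
  funext j
  exact Function.update_of_ne
    (fun h => by have := congrArg Fin.val h; simp at this; omega) _ _

/-- product of a front function and a back function is slotwise multilinear -/
theorem MLfun_split {n k m : ℕ} (hk : k + m = n) {f : (Fin k → B) → B} {g : (Fin m → B) → B}
    (hf : MLfun f) (hg : MLfun g) :
    MLfun (fun b : Fin n → B =>
      f (fun i => b ⟨i.1, by omega⟩) * g (fun i => b ⟨k + i.1, by omega⟩)) := by
  intro b i x y c
  dsimp only
  by_cases hik : i.1 < k
  · rw [update_back_skip hk b i hik (x + y), update_back_skip hk b i hik x,
      update_back_skip hk b i hik y, update_back_skip hk b i hik (c • x),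
      update_front (by omega) b i hik (x + y), update_front (by omega) b i hik x,
      update_front (by omega) b i hik y, update_front (by omega) b i hik (c • x)]
    constructor
    · rw [((hf _ ⟨i.1, hik⟩ x y c).1 : _), add_mul]
    · rw [((hf _ ⟨i.1, hik⟩ x y c).2 : _), smul_mul_assoc]
  · have hik' : k ≤ i.1 := by omega
    rw [update_front_skip (by omega) b i hik (x + y), update_front_skip (by omega) b i hik x,
      update_front_skip (by omega) b i hik y, update_front_skip (by omega) b i hik (c • x),
      update_back hk b i hik' (x + y), update_back hk b i hik' x, update_back hk b i hik' y,
      update_back hk b i hik' (c • x)]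
    constructor
    · rw [((hg _ ⟨i.1 - k, by omega⟩ x y c).1 : _), mul_add]
    · rw [((hg _ ⟨i.1 - k, by omega⟩ x y c).2 : _), mul_smul_comm]

theorem MLfun_mulS {α β : FormalMulSeries B} (n : ℕ)
    (hα : ∀ k, k ≤ n → MLfun (α k)) (hβ : ∀ k, k ≤ n → MLfun (β k)) :
    MLfun (mulS α β n) := by
  have : MLfun (fun b : Fin n → B => ∑ k : Fin (n + 1),
      α k.1 (fun i => b ⟨i.1, by have := i.2; have := k.2; omega⟩) *
        β (n - k.1) (fun i => b ⟨k.1 + i.1, by have := i.2; have := k.2; omega⟩)) := by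
    apply MLfun_sum
    intro k _
    exact MLfun_split (by omega) (hα k.1 (by omega)) (hβ (n - k.1) (by omega))
  exact this

theorem isMultilinearSeries_mulS {α β : FormalMulSeries B}
    (hα : IsMultilinearSeries α) (hβ : IsMultilinearSeries β) :
    IsMultilinearSeries (mulS α β) :=
  fun n => MLfun_mulS n (fun k _ => hα k) (fun k _ => hβ k)

end Helpers

section MulAlg
variable {B : Type*} [Ring B] [Algebra ℂ B]

theorem mulS_apply_zero_left (x y : FormalMulSeries B) (hx0 : ∀ v : Fin 0 → B, x 0 v = 0)
    {m : ℕ} (hm : m = 0) (v : Fin m → B) : mulS x y m v = 0 := by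
  subst hm
  rw [mulS]
  apply Finset.sum_eq_zero
  intro k _
  have hk : (k : ℕ) = 0 := by have := k.2; omega
  have h1 : x (k : ℕ) (fun i => v ⟨i.1, by have := i.2; have := k.2; omega⟩) = 0 :=
    (rawCongr x (w := fun i : Fin 0 => i.elim0) hk
      (fun i hi hi' => absurd hi' (by omega))).trans (hx0 _)
  rw [h1, zero_mul]

/-- The windowed upper-triangular matrix attached to a series, relative to `b`. -/
def toMat (α : FormalMulSeries B) (n : ℕ) (b : Fin n → B) :
    Matrix (Fin (n+1)) (Fin (n+1)) B := Matrix.of fun s t =>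
  if h : s.1 ≤ t.1 then
    α (t.1 - s.1) (fun i => b ⟨s.1 + i.1, by have := i.2; have := t.2; omega⟩)
  else 0

theorem toMat_apply_0n (α : FormalMulSeries B) (n : ℕ) (b : Fin n → B) :
    toMat α n b ⟨0, by omega⟩ ⟨n, by omega⟩ = α n b := by
  simp only [toMat, Matrix.of_apply]
  split_ifs with h
  · exact rawCongr α (by simp) (fun i hi hi' => by congr 1; exact Fin.ext (by simp))
  · simp at h

theorem toMat_oneS (n : ℕ) (b : Fin n → B) : toMat (oneS : FormalMulSeries B) n b = 1 := by
  ext s t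
  simp only [toMat, Matrix.of_apply, Matrix.one_apply, oneS]
  split_ifs with h1 h2 h3 h4 h5
  · rfl
  · exact absurd (Fin.ext (by omega)) h3
  · exact absurd (by rw [h4]; omega) h2
  · rfl
  · exact absurd (by rw [h5] at h1; exact absurd le_rfl h1) (fun h => h)
  · rfl

theorem toMat_mulS (α β : FormalMulSeries B) (n : ℕ) (b : Fin n → B) :
    toMat (mulS α β) n b = toMat α n b * toMat β n b := by
  ext s t
  rw [Matrix.mul_apply]
  simp only [toMat, Matrix.of_apply]
  split_ifs with h
  · -- restrict RHS sum to Icc s t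
    have hsub : ∑ m : Fin (n+1),
          (if hm : s.1 ≤ m.1 then
            α (m.1 - s.1) (fun i => b ⟨s.1 + i.1, by have := i.2; have := m.2; omega⟩) else 0) *
          (if hm : m.1 ≤ t.1 then
            β (t.1 - m.1) (fun i => b ⟨m.1 + i.1, by have := i.2; have := t.2; omega⟩) else 0)
        = ∑ m ∈ Finset.Icc s t,
          α (m.1 - s.1) (fun i => b ⟨s.1 + i.1, by have := i.2; have := m.2; omega⟩) *
          β (t.1 - m.1) (fun i => b ⟨m.1 + i.1, by have := i.2; have := t.2; omega⟩) := by
      rw [← Finset.sum_subset (Finset.subset_univ (Finset.Icc s t))]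
      · apply Finset.sum_congr rfl
        intro m hm
        simp only [Finset.mem_Icc, Fin.le_def] at hm
        rw [dif_pos hm.1, dif_pos hm.2]
      · intro m _ hm
        simp only [Finset.mem_Icc, Fin.le_def, not_and_or, not_le] at hm
        rcases hm with hm | hm
        · rw [dif_neg (show ¬ (s : ℕ) ≤ (m : ℕ) by omega), zero_mul]
        · rw [dif_neg (show ¬ (m : ℕ) ≤ (t : ℕ) by omega), mul_zero]
    rw [hsub, mulS]
    refine Finset.sum_nbij'
      (i := fun k : Fin (t.1 - s.1 + 1) => (⟨s.1 + k.1, by have := k.2; have := t.2; omega⟩ : Fin (n+1)))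
      (j := fun m : Fin (n+1) => (⟨min (m.1 - s.1) (t.1 - s.1), by omega⟩ : Fin (t.1 - s.1 + 1)))
      ?_ ?_ ?_ ?_ ?_
    · intro k _
      simp only [Finset.mem_Icc, Fin.le_def]
      have := k.2
      exact ⟨by omega, by omega⟩
    · intro m _; exact Finset.mem_univ _
    · intro k _
      exact Fin.ext (by simp only [Fin.val_mk]; have := k.2; omega)
    · intro m hm
      simp only [Finset.mem_Icc, Fin.le_def] at hm
      exact Fin.ext (by simp only [Fin.val_mk]; omega)
    · intro k hk
      have hk2 := k.2
      congr 1
      · exact rawCongr α (by simp only [Fin.val_mk]; omega) (fun i hi hi' => rfl)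
      · exact rawCongr β (by simp only [Fin.val_mk]; omega)
          (fun i hi hi' => by congr 1; exact Fin.ext (by simp only [Fin.val_mk]; omega))
  · symm
    apply Finset.sum_eq_zero
    intro m _
    by_cases hsm : s.1 ≤ m.1
    · rw [dif_neg (show ¬ (m : ℕ) ≤ (t : ℕ) by omega), mul_zero]
    · rw [dif_neg hsm, zero_mul]

theorem series_eq_of_toMat {α β : FormalMulSeries B} (n : ℕ) (b : Fin n → B)
    (h : toMat α n b = toMat β n b) : α n b = β n b := by
  rw [← toMat_apply_0n α n b, ← toMat_apply_0n β n b, h]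

theorem mulS_assoc (α β γ : FormalMulSeries B) : mulS (mulS α β) γ = mulS α (mulS β γ) := by
  funext n b
  apply series_eq_of_toMat n b
  rw [toMat_mulS, toMat_mulS, toMat_mulS, toMat_mulS, Matrix.mul_assoc]

theorem mulS_one_left (α : FormalMulSeries B) : mulS oneS α = α := by
  funext n b
  apply series_eq_of_toMat n b
  rw [toMat_mulS, toMat_oneS, Matrix.one_mul]

theorem mulS_one_right (α : FormalMulSeries B) : mulS α oneS = α := by
  funext n b
  apply series_eq_of_toMat n b
  rw [toMat_mulS, toMat_oneS, Matrix.mul_one]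

end MulAlg

section MulInv
variable {B : Type*} [Ring B] [Algebra ℂ B]

noncomputable def invR (u : FormalMulSeries B) : ∀ n : ℕ, (Fin n → B) → B
  | 0 => fun _ => 1
  | (n+1) => fun b =>
      -(∑ k : Fin (n+1), u (k.1 + 1) (fun i => b ⟨i.1, by have := i.2; have := k.2; omega⟩) *
        invR u (n - k.1) (fun i => b ⟨k.1 + 1 + i.1, by have := i.2; have := k.2; omega⟩))
  termination_by n => n
  decreasing_by omega

noncomputable def invL (u : FormalMulSeries B) : ∀ n : ℕ, (Fin n → B) → B
  | 0 => fun _ => 1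
  | (n+1) => fun b =>
      -(∑ k : Fin (n+1), invL u k.1 (fun i => b ⟨i.1, by have := i.2; have := k.2; omega⟩) *
        u (n + 1 - k.1) (fun i => b ⟨k.1 + i.1, by have := i.2; have := k.2; omega⟩))
  termination_by n => n
  decreasing_by exact k.2

theorem mulS_invR (u : FormalMulSeries B) (hu0 : ∀ b, u 0 b = 1) :
    mulS u (invR u) = oneS := by
  funext n b
  match n with
  | 0 =>
    rw [mulS, Fin.sum_univ_one]
    show u 0 _ * invR u 0 _ = oneS 0 b
    rw [hu0, invR, one_mul, oneS]
    simp
  | (n+1) =>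
    rw [mulS, Fin.sum_univ_succ]
    have h0 : u (0 : Fin (n+2)).1 (fun i => b ⟨i.1, by have := i.2; omega⟩) = 1 := hu0 _
    rw [h0, one_mul]
    have h1 : invR u (n + 1 - (0 : Fin (n+2)).1)
        (fun i => b ⟨(0 : Fin (n+2)).1 + i.1, by have := i.2; omega⟩) = invR u (n+1) b := by
      exact rawCongr (invR u) rfl (fun i hi hi' => by congr 1; exact Fin.ext (by simp))
    rw [h1]
    have h2 : ∀ k : Fin (n+1),
        u ((k.succ : Fin (n+2)).1) (fun i => b ⟨i.1, by have := i.2; have := k.succ.2; omega⟩) *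
          invR u (n + 1 - (k.succ : Fin (n+2)).1)
            (fun i => b ⟨(k.succ : Fin (n+2)).1 + i.1, by have := i.2; have := k.succ.2; omega⟩)
        = u (k.1 + 1) (fun i => b ⟨i.1, by have := i.2; have := k.2; omega⟩) *
          invR u (n - k.1) (fun i => b ⟨k.1 + 1 + i.1, by have := i.2; have := k.2; omega⟩) := by
      intro k
      refine congrArg₂ (· * ·) (rawCongr u rfl (fun i hi hi' => rfl))
        (rawCongr (invR u) (by simp)
          (fun i hi hi' => congrArg b (Fin.ext (by simp))))
    rw [Finset.sum_congr rfl (fun k _ => h2 k)]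
    have h3 : invR u (n+1) b = -(∑ k : Fin (n+1),
        u (k.1 + 1) (fun i => b ⟨i.1, by have := i.2; have := k.2; omega⟩) *
        invR u (n - k.1) (fun i => b ⟨k.1 + 1 + i.1, by have := i.2; have := k.2; omega⟩)) := by
      rw [invR]
    rw [show oneS (n+1) b = (0 : B) by simp [oneS], h3]
    abel

theorem invL_mulS (u : FormalMulSeries B) (hu0 : ∀ b, u 0 b = 1) :
    mulS (invL u) u = oneS := by
  funext n b
  match n with
  | 0 =>
    rw [mulS, Fin.sum_univ_one]
    show invL u 0 _ * u 0 _ = oneS 0 b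
    rw [hu0, invL, one_mul, oneS]
    simp
  | (n+1) =>
    rw [mulS, Fin.sum_univ_castSucc]
    have h0 : u (n + 1 - ((Fin.last (n+1)) : Fin (n+2)).1)
        (fun i => b ⟨((Fin.last (n+1)) : Fin (n+2)).1 + i.1, by have := i.2; omega⟩) = 1 := by
      refine (rawCongr u (m := 0) (by simp) (fun i hi hi' => absurd hi' (by omega))).trans
        (hu0 (fun i => i.elim0))
    rw [h0, mul_one]
    have h1 : invL u ((Fin.last (n+1)).1) (fun i => b ⟨i.1, by have := i.2; omega⟩)
        = invL u (n+1) b := by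
      exact rawCongr (invL u) rfl (fun i hi hi' => rfl)
    rw [h1]
    have h2 : ∀ k : Fin (n+1),
        invL u ((k.castSucc : Fin (n+2)).1)
            (fun i => b ⟨i.1, by have := i.2; have := k.castSucc.2; omega⟩) *
          u (n + 1 - (k.castSucc : Fin (n+2)).1)
            (fun i => b ⟨(k.castSucc : Fin (n+2)).1 + i.1, by have := i.2; omega⟩)
        = invL u k.1 (fun i => b ⟨i.1, by have := i.2; have := k.2; omega⟩) *
          u (n + 1 - k.1) (fun i => b ⟨k.1 + i.1, by have := i.2; have := k.2; omega⟩) := by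
      intro k
      refine congrArg₂ (· * ·) (rawCongr (invL u) rfl (fun i hi hi' => rfl))
        (rawCongr u rfl (fun i hi hi' => congrArg b (Fin.ext (by simp))))
    rw [Finset.sum_congr rfl (fun k _ => h2 k)]
    have h3 : invL u (n+1) b = -(∑ k : Fin (n+1),
        invL u k.1 (fun i => b ⟨i.1, by have := i.2; have := k.2; omega⟩) *
        u (n + 1 - k.1) (fun i => b ⟨k.1 + i.1, by have := i.2; have := k.2; omega⟩)) := by
      rw [invL]
    rw [show oneS (n+1) b = (0 : B) by simp [oneS], h3]
    abel

theorem invL_eq_invR (u : FormalMulSeries B) (hu0 : ∀ b, u 0 b = 1) :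
    invL u = invR u := by
  have h1 : mulS (invL u) (mulS u (invR u)) = mulS (mulS (invL u) u) (invR u) :=
    (mulS_assoc _ _ _).symm
  rw [mulS_invR u hu0, invL_mulS u hu0, mulS_one_right, mulS_one_left] at h1
  exact h1

theorem invR_mulS (u : FormalMulSeries B) (hu0 : ∀ b, u 0 b = 1) :
    mulS (invR u) u = oneS := by
  rw [← invL_eq_invR u hu0]
  exact invL_mulS u hu0

theorem isMultilinearSeries_invR (u : FormalMulSeries B) (hu : IsMultilinearSeries u) :
    IsMultilinearSeries (invR u) := by
  intro n
  show MLfun (invR u n)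
  induction n using Nat.strong_induction_on with
  | _ n ih =>
    match n with
    | 0 => exact fun b i => i.elim0
    | (n+1) =>
      show MLfun (invR u (n+1))
      have heq : invR u (n+1) = fun b =>
          -(∑ k : Fin (n+1), u (k.1 + 1) (fun i => b ⟨i.1, by have := i.2; have := k.2; omega⟩) *
            invR u (n - k.1)
              (fun i => b ⟨k.1 + 1 + i.1, by have := i.2; have := k.2; omega⟩)) := by
        funext b; rw [invR]
      rw [heq]
      apply MLfun_neg
      apply MLfun_sum
      intro k _
      exact MLfun_split (by omega) (hu (k.1 + 1)) (ih (n - k.1) (by omega))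

end MulInv

section CompAlg
variable {B : Type*} [Ring B] [Algebra ℂ B]

open Composition in
/-- a single composition term is slotwise multilinear -/
theorem MLfun_compTerm {n : ℕ} (ρ τ : FormalMulSeries B) (c : Composition n)
    (hρ : MLfun (ρ c.length)) (hτ : ∀ i : Fin c.length, MLfun (τ (c.blocksFun i))) :
    MLfun (fun b : Fin n → B =>
      ρ c.length (fun i => τ (c.blocksFun i) (fun j => b (c.embedding i j)))) := by
  intro b i₀ x y c0
  dsimp only
  have key : ∀ t : B,
      (fun i => τ (c.blocksFun i) (fun j => Function.update b i₀ t (c.embedding i j)))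
        = Function.update (fun i => τ (c.blocksFun i) (fun j => b (c.embedding i j)))
            (c.index i₀)
            (τ (c.blocksFun (c.index i₀))
              (Function.update (fun j => b (c.embedding (c.index i₀) j))
                (c.invEmbedding i₀) t)) := by
    intro t
    funext i
    by_cases hij : i = c.index i₀
    · subst hij
      rw [Function.update_self]
      congr 1
      funext j
      by_cases hj : j = c.invEmbedding i₀
      · subst hj
        rw [Composition.embedding_comp_inv, Function.update_self, Function.update_self]
      · rw [Function.update_of_ne (fun he => hj
            ((c.embedding (c.index i₀)).injective
              (he.trans (c.embedding_comp_inv i₀).symm))),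
          Function.update_of_ne hj]
    · rw [Function.update_of_ne hij]
      congr 1
      funext j
      refine Function.update_of_ne (fun he => hij ?_) _ _
      rw [← c.index_embedding i j, he]
  rw [key (x + y), key x, key y, key (c0 • x)]
  constructor
  · rw [(hτ (c.index i₀) _ (c.invEmbedding i₀) x y c0).1]
    exact (hρ (fun i => τ (c.blocksFun i) (fun j => b (c.embedding i j))) (c.index i₀)
      (τ (c.blocksFun (c.index i₀))
        (Function.update (fun j => b (c.embedding (c.index i₀) j)) (c.invEmbedding i₀) x))
      (τ (c.blocksFun (c.index i₀))
        (Function.update (fun j => b (c.embedding (c.index i₀) j)) (c.invEmbedding i₀) y))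
      c0).1
  · rw [(hτ (c.index i₀) _ (c.invEmbedding i₀) x y c0).2]
    exact (hρ (fun i => τ (c.blocksFun i) (fun j => b (c.embedding i j))) (c.index i₀)
      (τ (c.blocksFun (c.index i₀))
        (Function.update (fun j => b (c.embedding (c.index i₀) j)) (c.invEmbedding i₀) x))
      (τ (c.blocksFun (c.index i₀))
        (Function.update (fun j => b (c.embedding (c.index i₀) j)) (c.invEmbedding i₀) x))
      c0).2

theorem isMultilinearSeries_compS {ρ τ : FormalMulSeries B}
    (hρ : IsMultilinearSeries ρ) (hτ : IsMultilinearSeries τ) :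
    IsMultilinearSeries (compS ρ τ) := by
  intro n
  show MLfun (compS ρ τ n)
  have : MLfun (fun b : Fin n → B => ∑ c : Composition n,
      ρ c.length (fun i => τ (c.blocksFun i) (fun j => b (c.embedding i j)))) := by
    apply MLfun_sum
    intro c _
    exact MLfun_compTerm ρ τ c (hρ c.length) (fun i => hτ (c.blocksFun i))
  exact this

/-- `x ∘ I = x` for multilinear `x` -/
theorem compS_idS_right {x : FormalMulSeries B} (hx : IsMultilinearSeries x) :
    compS x idS = x := by
  funext n b
  rw [compS]
  rw [Finset.sum_eq_single (Composition.ones n)]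
  · refine rawCongr x (Composition.ones_length n) (fun i hi hi' => ?_)
    have h2 : (idS : FormalMulSeries B) ((Composition.ones n).blocksFun ⟨i, hi⟩)
        (fun j => b ((Composition.ones n).embedding ⟨i, hi⟩ j))
        = (idS : FormalMulSeries B) 1
          (fun j : Fin 1 => b ((Composition.ones n).embedding ⟨i, hi⟩
            ⟨j.1, by rw [Composition.ones_blocksFun]; exact j.2⟩)) :=
      rawCongr idS (Composition.ones_blocksFun n ⟨i, hi⟩) (fun l hl hl' => rfl)
    rw [h2, idS_one]
    refine congrArg b (Fin.ext ?_)
    simp only [Composition.coe_embedding]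
    rw [Composition.ones_sizeUpTo]
    omega
  · intro c _ hc
    rw [Composition.ne_ones_iff] at hc
    obtain ⟨k, hk, hk1⟩ := hc
    obtain ⟨j, hjk⟩ := List.mem_iff_get.1 hk
    have hj' : j.1 < c.length := Nat.lt_of_lt_of_le j.2 (c.blocks_length).le
    have hbf : c.blocksFun ⟨j.1, hj'⟩ = k := by rw [← hjk]; rfl
    have hzero : (idS : FormalMulSeries B) (c.blocksFun ⟨j.1, hj'⟩)
        (fun l => b (c.embedding ⟨j.1, hj'⟩ l)) = 0 := idS_ne (by omega) _
    exact MLfun.zero_slot (hx c.length) _ ⟨j.1, hj'⟩ hzero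
  · intro h
    exact absurd (Finset.mem_univ _) h

/-- `I ∘ x = x` for `x` with zero constant term -/
theorem compS_idS_left {x : FormalMulSeries B} (h0 : ∀ b, x 0 b = 0) :
    compS idS x = x := by
  funext n b
  rw [compS]
  match n with
  | 0 =>
    rw [h0]
    apply Finset.sum_eq_zero
    intro c _
    have hc : c.length = 0 := by have := c.length_le; omega
    exact (rawCongr idS hc (w := fun l : Fin 0 => l.elim0)
      (fun l hl hl' => absurd hl' (by omega))).trans (idS_ne (by omega) _)
  | (m+1) =>
    set cs : Composition (m+1) := Composition.single (m+1) (by omega) with hcs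
    rw [Finset.sum_eq_single cs]
    · have h2 : (idS : FormalMulSeries B) (cs.length)
          (fun i => x (cs.blocksFun i) (fun j => b (cs.embedding i j)))
          = (idS : FormalMulSeries B) 1
            (fun i : Fin 1 => x (cs.blocksFun ⟨i.1, by rw [Composition.single_length]; exact i.2⟩)
              (fun j => b (cs.embedding ⟨i.1, by rw [Composition.single_length]; exact i.2⟩ j))) :=
        rawCongr idS (Composition.single_length _) (fun l hl hl' => rfl)
      rw [h2, idS_one]
      refine rawCongr x (Composition.single_blocksFun _ _) (fun l hl hl' => ?_)
      refine congrArg b (Fin.ext ?_)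
      simp only [Composition.coe_embedding]
      have h3 : cs.sizeUpTo ((⟨0, one_pos⟩ : Fin 1) : ℕ) = 0 := Composition.sizeUpTo_zero _
      rw [h3]
      omega
    · intro c _ hc
      have hlen : c.length ≠ 1 := by
        intro h1
        exact hc ((Composition.eq_single_iff_length (by omega)).2 h1)
      exact idS_ne hlen _
    · intro h
      exact absurd (Finset.mem_univ _) h

/-- bundle a slotwise-multilinear component as a `MultilinearMap` -/
def toMM (ω : FormalMulSeries B) (n : ℕ) (h : MLfun (ω n)) :
    MultilinearMap ℂ (fun _ : Fin n => B) B where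
  toFun := ω n
  map_update_add' := by
    intro inst m i x y
    rw [Subsingleton.elim inst (instDecidableEqFin n)]
    exact (h m i x y 0).1
  map_update_smul' := by
    intro inst m i c x
    rw [Subsingleton.elim inst (instDecidableEqFin n)]
    exact (h m i x x c).2

open Composition in
theorem compS_assoc (r q p : FormalMulSeries B) (hr : IsMultilinearSeries r) :
    compS (compS r q) p = compS r (compS q p) := by
  funext n v
  have e1 : ∑ x : (Σ c : Composition n, Composition c.length),
        r x.2.length (fun i => q (x.2.blocksFun i) (fun j =>
          p (x.1.blocksFun (x.2.embedding i j))
            (fun l => v (x.1.embedding (x.2.embedding i j) l))))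
      = compS (compS r q) p n v := by
    rw [← Finset.univ_sigma_univ, Finset.sum_sigma]
    rfl
  have e2 : ∑ y : (Σ c : Composition n, ∀ i : Fin c.length, Composition (c.blocksFun i)),
        r y.1.length (fun i => q ((y.2 i).length) (fun j =>
          p ((y.2 i).blocksFun j)
            (fun l => v (y.1.embedding i ((y.2 i).embedding j l)))))
      = compS r (compS q p) n v := by
    rw [← Finset.univ_sigma_univ, Finset.sum_sigma]
    refine Finset.sum_congr rfl fun c _ => ?_
    exact (MultilinearMap.map_sum (toMM r c.length (hr c.length))
      (fun i d => q (Composition.length d) (fun j =>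
        p (d.blocksFun j) (fun l => v (c.embedding i (d.embedding j l)))))).symm
  rw [← e1, ← e2, ← (Composition.sigmaEquivSigmaPi n).sum_comp]
  refine Finset.sum_congr rfl fun x _ => ?_
  obtain ⟨a, b⟩ := x
  dsimp [Composition.sigmaEquivSigmaPi]
  refine rawCongr r (Composition.length_gather a b).symm (fun i hi1 hi2 => ?_)
  refine rawCongr q (length_sigmaCompositionAux a b ⟨i, hi1⟩).symm (fun j hj1 hj2 => ?_)
  refine rawCongr p (blocksFun_sigmaCompositionAux a b ⟨i, hi1⟩ ⟨j, hj1⟩).symm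
    (fun l hl1 hl2 => ?_)
  refine congrArg v (Fin.ext ?_)
  simp only [Composition.coe_embedding]
  rw [sizeUpTo_sizeUpTo_add _ _ hi1 hj1, add_assoc]
  rfl

end CompAlg

section CompInv
variable {B : Type*} [Ring B] [Algebra ℂ B]

theorem blocksFun_lt {n : ℕ} (c : Composition n) (hc : c.length ≠ 1) (i : Fin c.length) :
    c.blocksFun i < n := by
  have hpos : 0 < c.length := i.pos
  have h2 : 2 ≤ c.length := by omega
  have key : ∀ i' : Fin c.length, i' ≠ i → c.blocksFun i < n := by
    intro i' hne
    calc c.blocksFun i < ∑ j, c.blocksFun j := by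
          refine Finset.single_lt_sum hne (Finset.mem_univ _) (Finset.mem_univ _)
            (c.one_le_blocksFun i') (fun k _ _ => ?_)
          exact Nat.zero_le _
      _ = n := c.sum_blocksFun
  by_cases h : i.1 = 0
  · exact key ⟨1, by omega⟩ (fun he => by have := congrArg Fin.val he; simp at this; omega)
  · exact key ⟨0, by omega⟩ (fun he => by have := congrArg Fin.val he; simp at this; omega)

noncomputable local instance compositionDecEq (n : ℕ) : DecidableEq (Composition n) :=
  Classical.decEq _

theorem length_lt_of_ne_ones {n : ℕ} (c : Composition n) (hc : c ≠ Composition.ones n) :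
    c.length < n := by
  have h1 := c.length_le
  have h2 : c.length ≠ n := fun h => hc (Composition.eq_ones_iff_length.2 h)
  omega

noncomputable def invC (α : FormalMulSeries B) : ∀ n : ℕ, (Fin n → B) → B
  | n => fun b => idS n b -
      ∑ c ∈ (Finset.univ.filter (fun c : Composition n => c.length ≠ 1)).attach,
        α c.1.length (fun i => invC α (c.1.blocksFun i) (fun j => b (c.1.embedding i j)))
  termination_by n => n
  decreasing_by
    refine blocksFun_lt c.1 ?_ i
    have := c.2
    simp only [Finset.mem_filter] at this
    exact this.2

noncomputable def invCL (α : FormalMulSeries B) : ∀ n : ℕ, (Fin n → B) → B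
  | n => fun b => idS n b -
      ∑ c ∈ (Finset.univ.filter (fun c : Composition n => c ≠ Composition.ones n)).attach,
        invCL α c.1.length (fun i => α (c.1.blocksFun i) (fun j => b (c.1.embedding i j)))
  termination_by n => n
  decreasing_by
    refine length_lt_of_ne_ones c.1 ?_
    have := c.2
    simp only [Finset.mem_filter] at this
    exact this.2

theorem invC_zero (α : FormalMulSeries B) (hα0 : ∀ b, α 0 b = 0) (b : Fin 0 → B) :
    invC α 0 b = 0 := by
  rw [invC]
  dsimp only
  rw [Finset.sum_attach _ (fun c : Composition 0 =>
    α c.length (fun i => invC α (c.blocksFun i) (fun j => b (c.embedding i j))))]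
  rw [idS_ne (by omega) b, Finset.sum_eq_zero, sub_zero]
  intro c _
  have hc : c.length = 0 := by have := c.length_le; omega
  exact (rawCongr α hc (w := fun l : Fin 0 => l.elim0)
    (fun l hl hl' => absurd hl' (by omega))).trans (hα0 _)

theorem compS_invC (α : FormalMulSeries B) (hα0 : ∀ b, α 0 b = 0)
    (hα1 : ∀ b, α 1 b = b ⟨0, one_pos⟩) :
    compS α (invC α) = idS := by
  funext n b
  rw [compS]
  rw [← Finset.sum_filter_add_sum_filter_not Finset.univ (fun c : Composition n => c.length = 1)]
  have hsec : ∑ c ∈ Finset.univ.filter (fun c : Composition n => ¬ c.length = 1),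
        α c.length (fun i => invC α (c.blocksFun i) (fun j => b (c.embedding i j)))
      = idS n b - invC α n b := by
    rw [← Finset.sum_attach (Finset.univ.filter (fun c : Composition n => ¬ c.length = 1))
      (fun c => α c.length (fun i => invC α (c.blocksFun i) (fun j => b (c.embedding i j))))]
    conv_rhs => rw [invC]
    dsimp only
    simp only [ne_eq]
    abel
  rw [hsec]
  have hfirst : ∑ c ∈ Finset.univ.filter (fun c : Composition n => c.length = 1),
        α c.length (fun i => invC α (c.blocksFun i) (fun j => b (c.embedding i j)))
      = invC α n b := by
    match n with
    | 0 =>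
      have hempty : Finset.univ.filter (fun c : Composition 0 => c.length = 1) = ∅ := by
        apply Finset.eq_empty_of_forall_notMem
        intro c hc
        simp only [Finset.mem_filter] at hc
        have := c.length_le
        omega
      rw [hempty, Finset.sum_empty, invC_zero α hα0 b]
    | (m+1) =>
      set cs : Composition (m+1) := Composition.single (m+1) (by omega) with hcs
      have hsing : Finset.univ.filter (fun c : Composition (m+1) => c.length = 1) = {cs} := by
        ext c
        simp only [Finset.mem_filter, Finset.mem_univ, true_and, Finset.mem_singleton]
        rw [← Composition.eq_single_iff_length (by omega)]
      rw [hsing, Finset.sum_singleton]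
      have h2 : α (cs.length)
          (fun i => invC α (cs.blocksFun i) (fun j => b (cs.embedding i j)))
          = α 1 (fun i : Fin 1 =>
              invC α (cs.blocksFun ⟨i.1, by rw [Composition.single_length]; exact i.2⟩)
                (fun j => b (cs.embedding ⟨i.1, by rw [Composition.single_length]; exact i.2⟩ j))) :=
        rawCongr α (Composition.single_length _) (fun l hl hl' => rfl)
      rw [h2, hα1]
      refine rawCongr (invC α) (Composition.single_blocksFun _ _) (fun l hl hl' => ?_)
      refine congrArg b (Fin.ext ?_)
      simp only [Composition.coe_embedding]
      have h3 : cs.sizeUpTo ((⟨0, one_pos⟩ : Fin 1) : ℕ) = 0 := Composition.sizeUpTo_zero _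
      rw [h3]
      omega
  rw [hfirst]
  abel

theorem invCL_compS (α : FormalMulSeries B) (hα1 : ∀ b, α 1 b = b ⟨0, one_pos⟩) :
    compS (invCL α) α = idS := by
  funext n b
  rw [compS]
  rw [← Finset.sum_filter_add_sum_filter_not Finset.univ
    (fun c : Composition n => c = Composition.ones n)]
  have hsec : ∑ c ∈ Finset.univ.filter (fun c : Composition n => ¬ c = Composition.ones n),
        invCL α c.length (fun i => α (c.blocksFun i) (fun j => b (c.embedding i j)))
      = idS n b - invCL α n b := by
    rw [← Finset.sum_attach (Finset.univ.filter
        (fun c : Composition n => ¬ c = Composition.ones n))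
      (fun c => invCL α c.length (fun i => α (c.blocksFun i) (fun j => b (c.embedding i j))))]
    conv_rhs => rw [invCL]
    dsimp only
    simp only [ne_eq]
    abel
  rw [hsec]
  have hones : Finset.univ.filter (fun c : Composition n => c = Composition.ones n)
      = {Composition.ones n} := by
    ext c
    simp only [Finset.mem_filter, Finset.mem_univ, true_and, Finset.mem_singleton]
  rw [hones, Finset.sum_singleton]
  have hfirst : invCL α ((Composition.ones n).length)
      (fun i => α ((Composition.ones n).blocksFun i)
        (fun j => b ((Composition.ones n).embedding i j)))
      = invCL α n b := by
    refine rawCongr (invCL α) (Composition.ones_length n) (fun i hi hi' => ?_)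
    have h2 : α ((Composition.ones n).blocksFun ⟨i, hi⟩)
        (fun j => b ((Composition.ones n).embedding ⟨i, hi⟩ j))
        = α 1 (fun j : Fin 1 => b ((Composition.ones n).embedding ⟨i, hi⟩
            ⟨j.1, by rw [Composition.ones_blocksFun]; exact j.2⟩)) :=
      rawCongr α (Composition.ones_blocksFun n ⟨i, hi⟩) (fun l hl hl' => rfl)
    rw [h2, hα1]
    refine congrArg b (Fin.ext ?_)
    simp only [Composition.coe_embedding]
    rw [Composition.ones_sizeUpTo]
    omega
  rw [hfirst]
  abel

theorem isMultilinearSeries_invC (α : FormalMulSeries B) (hα : IsMultilinearSeries α) :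
    IsMultilinearSeries (invC α) := by
  intro n
  show MLfun (invC α n)
  induction n using Nat.strong_induction_on with
  | _ n ih =>
    have heq : invC α n = fun b => idS n b -
        ∑ c ∈ (Finset.univ.filter (fun c : Composition n => c.length ≠ 1)).attach,
          α c.1.length (fun i => invC α (c.1.blocksFun i) (fun j => b (c.1.embedding i j))) := by
      funext b; rw [invC]
    rw [heq]
    apply MLfun_sub (MLfun_idS n)
    apply MLfun_sum
    intro c _
    have hc : c.1.length ≠ 1 := by
      have := c.2
      simp only [Finset.mem_filter] at this
      exact this.2
    exact MLfun_compTerm α (invC α) c.1 (hα c.1.length)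
      (fun i => ih (c.1.blocksFun i) (blocksFun_lt c.1 hc i))

theorem isMultilinearSeries_invCL (α : FormalMulSeries B) (hα : IsMultilinearSeries α) :
    IsMultilinearSeries (invCL α) := by
  intro n
  show MLfun (invCL α n)
  induction n using Nat.strong_induction_on with
  | _ n ih =>
    have heq : invCL α n = fun b => idS n b -
        ∑ c ∈ (Finset.univ.filter (fun c : Composition n => c ≠ Composition.ones n)).attach,
          invCL α c.1.length (fun i => α (c.1.blocksFun i) (fun j => b (c.1.embedding i j))) := by
      funext b; rw [invCL]
    rw [heq]
    apply MLfun_sub (MLfun_idS n)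
    apply MLfun_sum
    intro c _
    have hc : c.1 ≠ Composition.ones n := by
      have := c.2
      simp only [Finset.mem_filter] at this
      exact this.2
    exact MLfun_compTerm (invCL α) α c.1 (ih c.1.length (length_lt_of_ne_ones c.1 hc))
      (fun i => hα (c.1.blocksFun i))

theorem invCL_eq_invC (α : FormalMulSeries B) (hα : IsMultilinearSeries α)
    (hα0 : ∀ b, α 0 b = 0) (hα1 : ∀ b, α 1 b = b ⟨0, one_pos⟩) :
    invCL α = invC α := by
  have h1 : compS (compS (invCL α) α) (invC α) = compS (invCL α) (compS α (invC α)) :=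
    compS_assoc _ _ _ (isMultilinearSeries_invCL α hα)
  rw [compS_invC α hα0 hα1, invCL_compS α hα1] at h1
  rw [compS_idS_left (fun b => invC_zero α hα0 b)] at h1
  rw [compS_idS_right (isMultilinearSeries_invCL α hα)] at h1
  exact h1.symm

theorem invC_compS (α : FormalMulSeries B) (hα : IsMultilinearSeries α)
    (hα0 : ∀ b, α 0 b = 0) (hα1 : ∀ b, α 1 b = b ⟨0, one_pos⟩) :
    compS (invC α) α = idS := by
  rw [← invCL_eq_invC α hα hα0 hα1]
  exact invCL_compS α hα1

end CompInv


theorem stmt_6 {B : Type*} [Ring B] [Algebra ℂ B] (β γ : FormalMulSeries B)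
    (hβ : IsMultilinearSeries β) (hγ : IsMultilinearSeries γ) :
    -- (a) `1 + Iβ` has a (multilinear) inverse for the formal product
    (∃ δ : FormalMulSeries B, IsMultilinearSeries δ ∧ IsMulInvOf δ (oneS + mulS idS β)) ∧
    -- (b) `I + IγI` has a (multilinear) inverse for formal composition
    (∃ δ' : FormalMulSeries B, IsMultilinearSeries δ' ∧
        IsCompInvOf δ' (idS + mulS (mulS idS γ) idS)) ∧
    -- (c) existence and uniqueness of `ρ = ^cR_{β,γ}` in `Mul[[𝔅]]` with
    --     `β = (ρ ∘ (I + IγI)) (1 + Iβ)`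
    (∃! ρ : FormalMulSeries B, IsMultilinearSeries ρ ∧
        β = mulS (compS ρ (idS + mulS (mulS idS γ) idS)) (oneS + mulS idS β)) ∧
    -- ... namely `ρ = (β (1 + Iβ)⁻¹) ∘ (I + IγI)^⟨−1⟩`: any such inverses produce
    -- a solution of the defining equation (hence the unique `ρ` above).
    (∀ δ δ' : FormalMulSeries B, IsMulInvOf δ (oneS + mulS idS β) →
        IsCompInvOf δ' (idS + mulS (mulS idS γ) idS) →
        IsMultilinearSeries (compS (mulS β δ) δ') ∧
        β = mulS (compS (compS (mulS β δ) δ') (idS + mulS (mulS idS γ) idS))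
              (oneS + mulS idS β)) := by
  set u : FormalMulSeries B := oneS + mulS idS β with hu_def
  set α : FormalMulSeries B := idS + mulS (mulS idS γ) idS with hα_def
  have hu0 : ∀ b : Fin 0 → B, u 0 b = 1 := by
    intro b
    show oneS 0 b + mulS idS β 0 b = 1
    rw [oneS_zero, mulS_apply_zero_left idS β (fun v => idS_ne (by omega) v) rfl, add_zero]
  have hα0 : ∀ b : Fin 0 → B, α 0 b = 0 := by
    intro b
    show idS 0 b + mulS (mulS idS γ) idS 0 b = 0
    rw [idS_ne (by omega), mulS_apply_zero_left (mulS idS γ) idS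
      (fun v => mulS_apply_zero_left idS γ (fun w => idS_ne (by omega) w) rfl v) rfl, zero_add]
  have hα1 : ∀ b : Fin 1 → B, α 1 b = b ⟨0, one_pos⟩ := by
    intro b
    show idS 1 b + mulS (mulS idS γ) idS 1 b = b ⟨0, one_pos⟩
    rw [idS_one]
    have h2 : mulS (mulS idS γ) idS 1 b = 0 := by
      rw [mulS]
      apply Finset.sum_eq_zero
      intro k _
      by_cases hk : (k : ℕ) = 0
      · rw [mulS_apply_zero_left idS γ (fun w => idS_ne (by omega) w) hk, zero_mul]
      · have hk1 : (1 : ℕ) - (k : ℕ) ≠ 1 := by have := k.2; omega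
        rw [idS_ne hk1, mul_zero]
    rw [h2, add_zero]
  have hML_id : IsMultilinearSeries (idS : FormalMulSeries B) := fun n => MLfun_idS n
  have hML_u : IsMultilinearSeries u := fun n =>
    MLfun_add (MLfun_oneS n) (isMultilinearSeries_mulS hML_id hβ n)
  have hML_α : IsMultilinearSeries α := fun n =>
    MLfun_add (MLfun_idS n) (isMultilinearSeries_mulS (isMultilinearSeries_mulS hML_id hγ)
      hML_id n)
  have hML_δ : IsMultilinearSeries (invR u) := isMultilinearSeries_invR u hML_u
  have hML_δ' : IsMultilinearSeries (invC α) := isMultilinearSeries_invC α hML_α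
  have hinv_u : IsMulInvOf (invR u) u := ⟨mulS_invR u hu0, invR_mulS u hu0⟩
  have hinv_α : IsCompInvOf (invC α) α :=
    ⟨invC_zero α hα0, compS_invC α hα0 hα1, invC_compS α hML_α hα0 hα1⟩
  -- the canonical solution
  set ρ : FormalMulSeries B := compS (mulS β (invR u)) (invC α) with hρ_def
  have hML_βδ : IsMultilinearSeries (mulS β (invR u)) := isMultilinearSeries_mulS hβ hML_δ
  have hML_ρ : IsMultilinearSeries ρ := isMultilinearSeries_compS hML_βδ hML_δ'
  have hρα : compS ρ α = mulS β (invR u) := by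
    calc compS (compS (mulS β (invR u)) (invC α)) α
        = compS (mulS β (invR u)) (compS (invC α) α) := compS_assoc _ _ _ hML_βδ
      _ = compS (mulS β (invR u)) idS := by rw [invC_compS α hML_α hα0 hα1]
      _ = mulS β (invR u) := compS_idS_right hML_βδ
  have hβeq : β = mulS (compS ρ α) u := by
    rw [hρα, mulS_assoc, invR_mulS u hu0, mulS_one_right]
  refine ⟨⟨invR u, hML_δ, hinv_u⟩, ⟨invC α, hML_δ', hinv_α⟩, ?_, ?_⟩
  · refine ⟨ρ, ⟨hML_ρ, hβeq⟩, ?_⟩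
    rintro ρ' ⟨hML_ρ', hρ'eq⟩
    have h1 : mulS β (invR u) = compS ρ' α := by
      calc mulS β (invR u) = mulS (mulS (compS ρ' α) u) (invR u) := by rw [← hρ'eq]
        _ = mulS (compS ρ' α) (mulS u (invR u)) := mulS_assoc _ _ _
        _ = mulS (compS ρ' α) oneS := by rw [mulS_invR u hu0]
        _ = compS ρ' α := mulS_one_right _
    calc ρ' = compS ρ' idS := (compS_idS_right hML_ρ').symm
      _ = compS ρ' (compS α (invC α)) := by rw [compS_invC α hα0 hα1]
      _ = compS (compS ρ' α) (invC α) := (compS_assoc _ _ _ hML_ρ').symm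
      _ = compS (mulS β (invR u)) (invC α) := by rw [← h1]
      _ = ρ := rfl
  · intro δ δ' hδ hδ'
    have hbd : mulS β δ = compS ρ α := by
      calc mulS β δ = mulS (mulS (compS ρ α) u) δ := by rw [← hβeq]
        _ = mulS (compS ρ α) (mulS u δ) := mulS_assoc _ _ _
        _ = mulS (compS ρ α) oneS := by rw [hδ.1]
        _ = compS ρ α := mulS_one_right _
    have hσ : compS (mulS β δ) δ' = ρ := by
      rw [hbd]
      calc compS (compS ρ α) δ' = compS ρ (compS α δ') := compS_assoc _ _ _ hML_ρ
        _ = compS ρ idS := by rw [hδ'.2.1]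
        _ = ρ := compS_idS_right hML_ρ
    rw [hσ]
    exact ⟨hML_ρ, hβeq⟩
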